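/- The subgroup N = {(a,1,x) : a(0)=1} is a normal subgroup of the group of almost-Riordan arrays; explicitly, for any (a,g,f) and any (b,1,x), one has (a,g,f)·(b,1,x)·(a,g,f)^{-1} = (1 + x g b̃(f), 1, x), where b̃(x) = (b(x)−1)/x. -/

import Mathlib

open PowerSeries Finset

/-- Shift: `shift h = (h - h₀)/x`, i.e. the series with coefficients `h₁, h₂, …`. -/
noncomputable def shift (h : PowerSeries ℤ) : PowerSeries ℤ :=
  PowerSeries.mk fun n => coeff (n + 1) h

/-- Composition `h ∘ f` of formal power series (intended for `f` with zero constant term,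
in which case `coeff n (f ^ k) = 0` for `k > n`). -/
noncomputable def comp (h f : PowerSeries ℤ) : PowerSeries ℤ :=
  PowerSeries.mk fun n => ∑ k ∈ Finset.range (n + 1), coeff k h * coeff n (f ^ k)

/-- Action of an almost-Riordan array `(a,g,f)` on a power series `b`:
`(a,g,f)·b = b₀ a + x g b̃(f)` where `b̃ = (b - b₀)/x`. -/
noncomputable def act (a g f b : PowerSeries ℤ) : PowerSeries ℤ :=
  C (coeff 0 b) * a + X * g * comp (shift b) f

/-- Product of almost-Riordan arrays: `(a,g,f)·(b,u,v) = ((a,g,f)·b, g·u(f), v(f))`. -/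
noncomputable def arMul (t s : PowerSeries ℤ × PowerSeries ℤ × PowerSeries ℤ) :
    PowerSeries ℤ × PowerSeries ℤ × PowerSeries ℤ :=
  (act t.1 t.2.1 t.2.2 s.1, t.2.1 * comp s.2.1 t.2.2, comp s.2.2 t.2.2)

/-- `(a,g,f)` is an almost-Riordan array: `a₀ = 1`, `g₀ = 1`, `f₀ = 0`, `f₁ = 1`. -/
def isAR (t : PowerSeries ℤ × PowerSeries ℤ × PowerSeries ℤ) : Prop :=
  coeff 0 t.1 = 1 ∧ coeff 0 t.2.1 = 1 ∧ coeff 0 t.2.2 = 0 ∧ coeff 1 t.2.2 = 1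

lemma coeff_pow_zero {f : PowerSeries ℤ} (hf : coeff 0 f = 0) {n k : ℕ} (h : n < k) :
    coeff n (f ^ k) = 0 := by
  have hd : (X : PowerSeries ℤ) ^ k ∣ f ^ k :=
    pow_dvd_pow_of_dvd (PowerSeries.X_dvd_iff.mpr (by rwa [← coeff_zero_eq_constantCoeff_apply])) k
  exact PowerSeries.X_pow_dvd_iff.mp hd n h

lemma coeff_comp (h f : PowerSeries ℤ) (n : ℕ) :
    coeff n (comp h f) = ∑ k ∈ Finset.range (n + 1), coeff k h * coeff n (f ^ k) := by
  simp [comp]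

lemma comp_one_left (f : PowerSeries ℤ) : comp 1 f = 1 := by
  ext n
  rw [coeff_comp]
  rw [Finset.sum_eq_single 0]
  · simp
  · intro k hk hk0
    simp [PowerSeries.coeff_one, hk0]
  · simp

lemma comp_zero_left (f : PowerSeries ℤ) : comp 0 f = 0 := by
  ext n; simp [coeff_comp]

lemma comp_neg_left (h f : PowerSeries ℤ) : comp (-h) f = -comp h f := by
  ext n; simp [coeff_comp, Finset.sum_neg_distrib]

lemma comp_X_left {f : PowerSeries ℤ} (hf : coeff 0 f = 0) : comp X f = f := by
  ext n
  rw [coeff_comp]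
  rw [Finset.sum_eq_single 1]
  · cases n with
    | zero => simp [hf]
    | succ m => simp
  · intro k hk hk1
    simp [PowerSeries.coeff_X, hk1]
  · intro h1
    simp only [Finset.mem_range, not_lt] at h1
    have : n = 0 := by omega
    subst this
    simp [hf]

lemma comp_X_right (h : PowerSeries ℤ) : comp h X = h := by
  ext n
  rw [coeff_comp]
  rw [Finset.sum_eq_single n]
  · simp [PowerSeries.X_pow_eq]
  · intro k hk hkn
    rw [PowerSeries.X_pow_eq, PowerSeries.coeff_monomial, if_neg (fun h => hkn h.symm), mul_zero]
  · simp

lemma sum_antidiag_range (n : ℕ) (g : ℕ → ℕ → ℤ) (hg : ∀ k l, n < k + l → g k l = 0) :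
    ∑ m ∈ Finset.range (n + 1), ∑ p ∈ Finset.HasAntidiagonal.antidiagonal m, g p.1 p.2
      = ∑ k ∈ Finset.range (n + 1), ∑ l ∈ Finset.range (n + 1), g k l := by
  rw [← Finset.sum_biUnion]
  · rw [← Finset.sum_product']
    apply Finset.sum_subset
    · intro p hp
      simp only [Finset.mem_biUnion, Finset.mem_range, Finset.HasAntidiagonal.mem_antidiagonal] at hp
      obtain ⟨m, hm, hpm⟩ := hp
      simp only [Finset.mem_product, Finset.mem_range]
      omega
    · intro p hp hnp
      simp only [Finset.mem_biUnion, Finset.mem_range, Finset.HasAntidiagonal.mem_antidiagonal] at hnp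
      apply hg
      by_contra hc
      exact hnp ⟨p.1 + p.2, by omega, rfl⟩
  · intro i _ j _ hij
    apply Finset.disjoint_left.mpr
    intro p hpi hpj
    simp only [Finset.HasAntidiagonal.mem_antidiagonal] at hpi hpj
    omega

lemma comp_mul {f : PowerSeries ℤ} (hf : coeff 0 f = 0) (u v : PowerSeries ℤ) :
    comp (u * v) f = comp u f * comp v f := by
  ext n
  have key : ∀ w : PowerSeries ℤ, ∀ m, m ∈ Finset.range (n + 1) →
      coeff m (comp w f) = ∑ k ∈ Finset.range (n + 1), coeff k w * coeff m (f ^ k) := by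
    intro w m hm
    rw [coeff_comp]
    apply Finset.sum_subset
    · intro k hk; simp only [Finset.mem_range] at *; omega
    · intro k _ hk
      simp only [Finset.mem_range, not_lt] at hk
      rw [coeff_pow_zero hf (by omega), mul_zero]
  rw [PowerSeries.coeff_mul, coeff_comp]
  calc ∑ m ∈ Finset.range (n + 1), coeff m (u * v) * coeff n (f ^ m)
      = ∑ m ∈ Finset.range (n + 1), ∑ p ∈ Finset.HasAntidiagonal.antidiagonal m,
          coeff p.1 u * coeff p.2 v * coeff n (f ^ (p.1 + p.2)) := by
        apply Finset.sum_congr rfl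
        intro m _
        rw [PowerSeries.coeff_mul, Finset.sum_mul]
        apply Finset.sum_congr rfl
        intro p hp
        rw [Finset.HasAntidiagonal.mem_antidiagonal] at hp
        rw [← hp]
    _ = ∑ k ∈ Finset.range (n + 1), ∑ l ∈ Finset.range (n + 1),
          coeff k u * coeff l v * coeff n (f ^ (k + l)) := by
        exact sum_antidiag_range n
          (fun k l => coeff k u * coeff l v * coeff n (f ^ (k + l)))
          (fun k l hkl => by simp only [coeff_pow_zero hf hkl, mul_zero])
    _ = ∑ k ∈ Finset.range (n + 1), ∑ l ∈ Finset.range (n + 1), ∑ p ∈ Finset.HasAntidiagonal.antidiagonal n,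
          (coeff k u * coeff p.1 (f ^ k)) * (coeff l v * coeff p.2 (f ^ l)) := by
        apply Finset.sum_congr rfl; intro k _
        apply Finset.sum_congr rfl; intro l _
        rw [pow_add, PowerSeries.coeff_mul, Finset.mul_sum]
        apply Finset.sum_congr rfl; intro p _
        ring
    _ = ∑ k ∈ Finset.range (n + 1), ∑ p ∈ Finset.HasAntidiagonal.antidiagonal n, ∑ l ∈ Finset.range (n + 1),
          (coeff k u * coeff p.1 (f ^ k)) * (coeff l v * coeff p.2 (f ^ l)) := by
        apply Finset.sum_congr rfl; intro k _; exact Finset.sum_comm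
    _ = ∑ p ∈ Finset.HasAntidiagonal.antidiagonal n, ∑ k ∈ Finset.range (n + 1), ∑ l ∈ Finset.range (n + 1),
          (coeff k u * coeff p.1 (f ^ k)) * (coeff l v * coeff p.2 (f ^ l)) := by
        exact Finset.sum_comm
    _ = ∑ p ∈ Finset.HasAntidiagonal.antidiagonal n, coeff p.1 (comp u f) * coeff p.2 (comp v f) := by
        apply Finset.sum_congr rfl; intro p hp
        rw [Finset.HasAntidiagonal.mem_antidiagonal] at hp
        rw [key u p.1 (by simp only [Finset.mem_range]; omega),
          key v p.2 (by simp only [Finset.mem_range]; omega), Finset.sum_mul_sum]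

lemma comp_pow {f : PowerSeries ℤ} (hf : coeff 0 f = 0) (v : PowerSeries ℤ) (k : ℕ) :
    comp (v ^ k) f = (comp v f) ^ k := by
  induction k with
  | zero => simp [comp_one_left]
  | succ m ih => rw [pow_succ, comp_mul hf, ih, pow_succ]

lemma comp_assoc {v f : PowerSeries ℤ} (hv : coeff 0 v = 0) (hf : coeff 0 f = 0)
    (u : PowerSeries ℤ) : comp (comp u v) f = comp u (comp v f) := by
  ext n
  rw [coeff_comp, coeff_comp]
  calc ∑ j ∈ Finset.range (n + 1), coeff j (comp u v) * coeff n (f ^ j)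
      = ∑ j ∈ Finset.range (n + 1), ∑ k ∈ Finset.range (n + 1),
          coeff k u * coeff j (v ^ k) * coeff n (f ^ j) := by
        apply Finset.sum_congr rfl; intro j hj
        rw [coeff_comp, Finset.sum_mul]
        apply Finset.sum_subset
        · intro k hk; simp only [Finset.mem_range] at *; omega
        · intro k _ hk
          simp only [Finset.mem_range, not_lt] at hk
          simp only [Finset.mem_range] at hj
          rw [coeff_pow_zero hv (by omega), mul_zero, zero_mul]
    _ = ∑ k ∈ Finset.range (n + 1), ∑ j ∈ Finset.range (n + 1),
          coeff k u * (coeff j (v ^ k) * coeff n (f ^ j)) := by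
        rw [Finset.sum_comm]
        exact Finset.sum_congr rfl fun k _ => Finset.sum_congr rfl fun j _ => mul_assoc _ _ _
    _ = ∑ k ∈ Finset.range (n + 1), coeff k u * coeff n ((comp v f) ^ k) := by
        apply Finset.sum_congr rfl; intro k _
        rw [← Finset.mul_sum, ← comp_pow hf, coeff_comp]

lemma coeff_zero_comp (v f : PowerSeries ℤ) : coeff 0 (comp v f) = coeff 0 v := by
  simp [coeff_comp]

lemma shift_X_mul (h : PowerSeries ℤ) : shift (X * h) = h := by
  ext n; simp [shift, PowerSeries.coeff_succ_X_mul]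

lemma shift_one_add_X_mul (h : PowerSeries ℤ) : shift (1 + X * h) = h := by
  ext n
  simp [shift, PowerSeries.coeff_succ_X_mul, PowerSeries.coeff_one]

lemma X_mul_shift (h : PowerSeries ℤ) : C (coeff 0 h) + X * shift h = h := by
  ext n
  cases n with
  | zero => simp [shift]
  | succ m =>
    rw [map_add, PowerSeries.coeff_succ_X_mul, PowerSeries.coeff_C, if_neg (Nat.succ_ne_zero m)]
    simp [shift]

/-- `N = {(a,1,x)}` is normal:
`(a,g,f)·(b,1,x)·(a,g,f)⁻¹ = (1 + x g b̃(f), 1, x)`.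
Here `fi = f̄`, `gi = 1/(g∘f̄)` and `(a,g,f)⁻¹ = ((1,−gi,fi)·a, gi, fi)`. -/
theorem statement14 (a g f b fi gi : PowerSeries ℤ)
    (ha : coeff 0 a = 1) (hg : coeff 0 g = 1)
    (hf0 : coeff 0 f = 0) (hf1 : coeff 1 f = 1)
    (hb : coeff 0 b = 1)
    (hfi0 : coeff 0 fi = 0)
    (hffi : comp f fi = X) (hfif : comp fi f = X)
    (hgi : comp g fi * gi = 1) :
    arMul (arMul (a, g, f) (b, 1, X)) (act 1 (-gi) fi a, gi, fi) =
      (1 + X * g * comp (shift b) f, 1, X) := by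
  have h1 : arMul (a, g, f) (b, 1, X) = (act a g f b, g, f) := by
    simp only [arMul]
    rw [comp_one_left, mul_one, comp_X_left hf0]
  rw [h1]
  have hkey : g * comp gi f = 1 := by
    have h2 := congrArg (fun w => comp w f) hgi
    rwa [comp_mul hf0, comp_assoc hfi0 hf0, hfif, comp_X_right, comp_one_left] at h2
  have hc : act 1 (-gi) fi a = 1 + X * (-(gi * comp (shift a) fi)) := by
    simp only [act, ha, map_one]
    ring
  have hc0 : coeff 0 (act 1 (-gi) fi a) = 1 := by
    rw [hc]
    simp
  have hshiftc : shift (act 1 (-gi) fi a) = -(gi * comp (shift a) fi) := by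
    rw [hc, shift_one_add_X_mul]
  have hSf : comp (comp (shift a) fi) f = shift a := by
    rw [comp_assoc hfi0 hf0, hfif, comp_X_right]
  have ha' : (1 : PowerSeries ℤ) + X * shift a = a := by
    have h3 := X_mul_shift a
    rwa [ha, map_one] at h3
  simp only [arMul, Prod.mk.injEq]
  refine ⟨?_, ?_, hfif⟩
  · rw [act, hc0, hshiftc, map_one, one_mul, comp_neg_left, comp_mul hf0, hSf]
    simp only [act, hb, map_one, one_mul]
    linear_combination (-(X * shift a)) * hkey - ha'
  · exact hkey
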